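/- arXiv:2001.04017 — 2 statements merged into one kernel-verified Lean document; each statement's English description precedes it below -/
import Mathlib

section
/- (Monotonicity and limit of the isoperimetric-type ratio.) Let n ≥ 2 be an integer and define ψ(r) = (n σ_n ∫_0^r sinh(s)^{n−1} ds) / sinh(r)^{n−1} for r > 0. Then ψ is strictly increasing on (0,∞), ψ(r) < n σ_n/(n−1) for every r > 0, and ψ(r) → n σ_n/(n−1) as r → ∞. Equivalently, with F the inverse of the volume function, the function φ(t) = t/sinh(F(t))^{n−1} is strictly increasing on (0,∞) with limit n σ_n/(n−1) at infinity and φ(t) < n σ_n/(n−1) for all t > 0. -/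
open MeasureTheory Real Set Filter
open scoped ENNReal NNReal BigOperators RealInnerProductSpace

noncomputable section

/-- Decreasing rearrangement of `u` with respect to the measure `μ`:
`u*(t) = inf {s > 0 : μ({|u| > s}) ≤ t}`. -/
def rearr {α : Type*} [MeasurableSpace α] (μ : Measure α) (u : α → ℝ) (t : ℝ) : ℝ :=
  sInf {s : ℝ | 0 < s ∧ μ {x | s < |u x|} ≤ ENNReal.ofReal t}

/-- Lorentz quasinorm `‖u‖_{p,q} = (∫_0^∞ (t^{1/p} u*(t))^q dt/t)^{1/q}`. -/
def lorentzNorm {α : Type*} [MeasurableSpace α] (μ : Measure α) (p q : ℝ) (u : α → ℝ) : ℝ :=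
  (∫ t in Ioi (0:ℝ), (t ^ (1/p) * rearr μ u t) ^ q / t) ^ (1/q)

/-- Hyperbolic volume measure `dV_g = (2/(1-|x|²))ⁿ dx` on the Poincaré ball model. -/
def hypVolume (n : ℕ) : Measure (EuclideanSpace ℝ (Fin n)) :=
  ((volume : Measure (EuclideanSpace ℝ (Fin n))).restrict
      (Metric.ball (0 : EuclideanSpace ℝ (Fin n)) 1)).withDensity
    (fun x => ENNReal.ofReal ((2 / (1 - ‖x‖ ^ 2)) ^ n))

/-- Euclidean Laplacian `Δu = ∑ᵢ ∂²u/∂xᵢ²`. -/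
def eLap {n : ℕ} (u : EuclideanSpace ℝ (Fin n) → ℝ) (x : EuclideanSpace ℝ (Fin n)) : ℝ :=
  ∑ i : Fin n, fderiv ℝ (fun y => fderiv ℝ u y (EuclideanSpace.single i 1)) x
    (EuclideanSpace.single i 1)

/-- Hyperbolic Laplace–Beltrami operator on the Poincaré ball:
`Δ_g u(x) = ((1-|x|²)/2)² Δu(x) + (n-2)((1-|x|²)/2)⟨x, ∇u(x)⟩`. -/
def hypLap {n : ℕ} (u : EuclideanSpace ℝ (Fin n) → ℝ) : EuclideanSpace ℝ (Fin n) → ℝ :=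
  fun x => ((1 - ‖x‖ ^ 2) / 2) ^ 2 * eLap u x
    + ((n : ℝ) - 2) * ((1 - ‖x‖ ^ 2) / 2) * ⟪x, gradient u x⟫

/-- Length of the hyperbolic gradient: `|∇_g u|(x) = ((1-|x|²)/2)|∇u(x)|`. -/
def hypGradLen {n : ℕ} (u : EuclideanSpace ℝ (Fin n) → ℝ) (x : EuclideanSpace ℝ (Fin n)) : ℝ :=
  ((1 - ‖x‖ ^ 2) / 2) * ‖gradient u x‖

/-- Smooth functions compactly supported in the open unit ball. -/
def IsTestFun {n : ℕ} (u : EuclideanSpace ℝ (Fin n) → ℝ) : Prop :=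
  ContDiff ℝ (⊤ : ℕ∞) u ∧ HasCompactSupport u ∧
    tsupport u ⊆ Metric.ball (0 : EuclideanSpace ℝ (Fin n)) 1

/-- Volume `σ_θ = π^{θ/2}/Γ(θ/2+1)` of the unit ball in "dimension" `θ`. -/
def sigmaVol (θ : ℝ) : ℝ := Real.pi ^ (θ / 2) / Real.Gamma (θ / 2 + 1)

/-- `j_{a,q} = min{j ∈ ℕ : j > 1 + a(q-1)/q}`. -/
def jexp (a q : ℝ) : ℕ := sInf {j : ℕ | 1 + a * (q - 1) / q < (j : ℝ)}

/-- Truncated exponential `Φ_{a,q}(t) = e^t - ∑_{j=0}^{j_{a,q}-2} t^j/j!`. -/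
def PhiAQ (a q t : ℝ) : ℝ :=
  Real.exp t - ∑ j ∈ Finset.range (jexp a q - 1), t ^ j / (Nat.factorial j : ℝ)

/-- Sharp Adams constant `β_{n,m}` for `m` even. -/
def betaEven (n m : ℕ) : ℝ :=
  Real.pi ^ ((n : ℝ) / 2) * 2 ^ (m : ℝ) * Real.Gamma ((m : ℝ) / 2) /
    (sigmaVol n ^ (((n : ℝ) - m) / n) * Real.Gamma (((n : ℝ) - m) / 2))

/-- Sharp Adams constant `β_{n,m}` for `m` odd. -/
def betaOdd (n m : ℕ) : ℝ :=
  Real.pi ^ ((n : ℝ) / 2) * 2 ^ (m : ℝ) * Real.Gamma (((m : ℝ) + 1) / 2) /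
    (sigmaVol n ^ (((n : ℝ) - m) / n) * Real.Gamma (((n : ℝ) - m + 1) / 2))

/-- Sharp Lorentz–Poincaré constant `C(n,m,p) = ((n-1)²/(p p'))^{m/2}` for `m = 2k` even. -/
def pconstEven (n k : ℕ) (p : ℝ) : ℝ := (((n : ℝ) - 1) ^ 2 / (p * (p / (p - 1)))) ^ k

/-- Sharp Lorentz–Poincaré constant `C(n,m,p) = ((n-1)/p)((n-1)²/(p p'))^{(m-1)/2}`
for `m = 2k+1` odd. -/
def pconstOdd (n k : ℕ) (p : ℝ) : ℝ :=
  (((n : ℝ) - 1) / p) * ((((n : ℝ) - 1) ^ 2 / (p * (p / (p - 1)))) ^ k)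

/-- The measure `λ_θ` on `(0,∞)` with density `θ σ_θ x^{θ-1}`. -/
def lamMeasure (θ : ℝ) : Measure ℝ :=
  (volume.restrict (Ioi (0:ℝ))).withDensity
    (fun x => ENNReal.ofReal (θ * sigmaVol θ * x ^ (θ - 1)))

/-- `μ_{q,1} = (q σ_q)^{1/(q-1)}`. -/
def muQ1 (q : ℝ) : ℝ := (q * sigmaVol q) ^ (1 / (q - 1))

open intervalIntegral in
private lemma iso_hasDerivAt_I (q : ℕ) (r : ℝ) :
    HasDerivAt (fun u : ℝ => ∫ s in (0:ℝ)..u, Real.sinh s ^ (q+1)) (Real.sinh r ^ (q+1)) r := by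
  have hc : Continuous (fun s : ℝ => Real.sinh s ^ (q+1)) := Real.continuous_sinh.pow _
  exact integral_hasDerivAt_right (hc.intervalIntegrable _ _)
    (hc.stronglyMeasurableAtFilter _ _) hc.continuousAt

private lemma iso_S_eq (q : ℕ) (r : ℝ) :
    Real.sinh r ^ (q+1) = ∫ s in (0:ℝ)..r, ((q:ℝ)+1) * Real.sinh s ^ q * Real.cosh s := by
  have h : ∀ x ∈ Set.uIcc (0:ℝ) r, HasDerivAt (fun u : ℝ => Real.sinh u ^ (q+1))
      (((q:ℝ)+1) * Real.sinh x ^ q * Real.cosh x) x := fun x _ => by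
    simpa using (Real.hasDerivAt_sinh x).fun_pow (q+1)
  have hint : IntervalIntegrable (fun x => ((q:ℝ)+1) * Real.sinh x ^ q * Real.cosh x)
      volume 0 r :=
    (((continuous_const.mul (Real.continuous_sinh.pow q)).mul
      Real.continuous_cosh)).intervalIntegrable _ _
  have := intervalIntegral.integral_eq_sub_of_hasDerivAt h hint
  simp only [Real.sinh_zero, zero_pow (Nat.succ_ne_zero q), sub_zero] at this
  exact this.symm

private lemma iso_key_lt (q : ℕ) {r : ℝ} (hr : 0 < r) :
    ((q:ℝ)+1) * (∫ s in (0:ℝ)..r, Real.sinh s ^ (q+1)) < Real.sinh r ^ (q+1) := by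
  rw [iso_S_eq q r, ← intervalIntegral.integral_const_mul]
  apply intervalIntegral.integral_lt_integral_of_continuousOn_of_le_of_exists_lt hr
  · exact (continuous_const.mul (Real.continuous_sinh.pow _)).continuousOn
  · exact ((continuous_const.mul (Real.continuous_sinh.pow q)).mul
      Real.continuous_cosh).continuousOn
  · intro x hx
    have hx0 : 0 ≤ Real.sinh x := Real.sinh_nonneg_iff.mpr hx.1.le
    calc ((q:ℝ)+1) * Real.sinh x ^ (q+1)
        = ((q:ℝ)+1) * Real.sinh x ^ q * Real.sinh x := by rw [pow_succ]; ring
      _ ≤ ((q:ℝ)+1) * Real.sinh x ^ q * Real.cosh x := by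
          apply mul_le_mul_of_nonneg_left (Real.sinh_lt_cosh x).le
          positivity
  · refine ⟨r, ⟨hr.le, le_refl r⟩, ?_⟩
    have h1 : 0 < Real.sinh r := Real.sinh_pos_iff.mpr hr
    calc ((q:ℝ)+1) * Real.sinh r ^ (q+1)
        = ((q:ℝ)+1) * Real.sinh r ^ q * Real.sinh r := by rw [pow_succ]; ring
      _ < ((q:ℝ)+1) * Real.sinh r ^ q * Real.cosh r := by
          apply mul_lt_mul_of_pos_left (Real.sinh_lt_cosh r)
          positivity

private lemma iso_S_split (q : ℕ) (r : ℝ) :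
    Real.sinh r ^ (q+1) = ((q:ℝ)+1) * (∫ s in (0:ℝ)..r, Real.sinh s ^ (q+1))
      + ((q:ℝ)+1) * (∫ s in (0:ℝ)..r, Real.sinh s ^ q * Real.exp (-s)) := by
  have hexpc : Continuous fun s : ℝ => Real.exp (-s) := Real.continuous_exp.comp continuous_neg
  rw [iso_S_eq q r, ← intervalIntegral.integral_const_mul, ← intervalIntegral.integral_const_mul,
    ← intervalIntegral.integral_add (f := fun x => ((q:ℝ)+1) * Real.sinh x ^ (q+1))
      (g := fun x => ((q:ℝ)+1) * (Real.sinh x ^ q * Real.exp (-x)))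
      (((continuous_const.mul (Real.continuous_sinh.pow _))).intervalIntegrable _ _)
      ((continuous_const.mul ((Real.continuous_sinh.pow q).mul
        hexpc)).intervalIntegrable _ _)]
  apply intervalIntegral.integral_congr
  intro s _
  have hcs : Real.cosh s = Real.sinh s + Real.exp (-s) := by
    rw [Real.cosh_eq, Real.sinh_eq]; ring
  show ((q:ℝ)+1) * Real.sinh s ^ q * Real.cosh s
      = ((q:ℝ)+1) * Real.sinh s ^ (q+1) + ((q:ℝ)+1) * (Real.sinh s ^ q * Real.exp (-s))
  rw [hcs]; ring

private lemma iso_J_le (q : ℕ) {r : ℝ} (hr : 0 < r) :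
    (∫ s in (0:ℝ)..r, Real.sinh s ^ q * Real.exp (-s)) ≤ Real.sinh r ^ q := by
  have hexpc : Continuous fun s : ℝ => Real.exp (-s) := Real.continuous_exp.comp continuous_neg
  have hcont1 : Continuous fun s : ℝ => Real.sinh s ^ q * Real.exp (-s) :=
    (Real.continuous_sinh.pow q).mul hexpc
  have hcont2 : Continuous fun s : ℝ => Real.sinh r ^ q * Real.exp (-s) :=
    continuous_const.mul hexpc
  have h1 : (∫ s in (0:ℝ)..r, Real.sinh s ^ q * Real.exp (-s))
      ≤ ∫ s in (0:ℝ)..r, Real.sinh r ^ q * Real.exp (-s) := by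
    apply intervalIntegral.integral_mono_on hr.le (hcont1.intervalIntegrable _ _)
      (hcont2.intervalIntegrable _ _)
    intro x hx
    have hx0 : 0 ≤ Real.sinh x := Real.sinh_nonneg_iff.mpr hx.1
    exact mul_le_mul_of_nonneg_right
      (pow_le_pow_left₀ hx0 (Real.sinh_le_sinh.mpr hx.2) q) (Real.exp_nonneg _)
  have h2 : (∫ s in (0:ℝ)..r, Real.exp (-s)) = 1 - Real.exp (-r) := by
    have h3 : ∀ x ∈ Set.uIcc (0:ℝ) r, HasDerivAt (fun s : ℝ => -Real.exp (-s))
        (Real.exp (-x)) x := fun x _ => by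
      simpa using ((Real.hasDerivAt_exp (-x)).comp x (hasDerivAt_neg x)).fun_neg
    rw [intervalIntegral.integral_eq_sub_of_hasDerivAt h3
      (hexpc.intervalIntegrable _ _)]
    simp; ring
  have h4 : (∫ s in (0:ℝ)..r, Real.sinh r ^ q * Real.exp (-s))
      = Real.sinh r ^ q * (1 - Real.exp (-r)) := by
    rw [intervalIntegral.integral_const_mul, h2]
  have h5 : 0 ≤ Real.sinh r ^ q := pow_nonneg (Real.sinh_nonneg_iff.mpr hr.le) q
  have h6 : 0 < Real.exp (-r) := Real.exp_pos _
  nlinarith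

private theorem iso_aux (q : ℕ) (c : ℝ) (hc : 0 < c)
    (g : ℝ → ℝ)
    (hg : ∀ r, g r = c * (∫ s in (0:ℝ)..r, Real.sinh s ^ (q+1)) / Real.sinh r ^ (q+1)) :
    StrictMonoOn g (Ioi 0) ∧ (∀ r, 0 < r → g r < c / ((q:ℝ)+1)) ∧
      Tendsto g atTop (nhds (c / ((q:ℝ)+1))) := by
  set I : ℝ → ℝ := fun u => ∫ s in (0:ℝ)..u, Real.sinh s ^ (q+1) with hI
  -- the auxiliary function k
  set k : ℝ → ℝ := fun u => Real.sinh u ^ (q+2) - ((q:ℝ)+1) * Real.cosh u * I u with hk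
  have hkderiv : ∀ r : ℝ, HasDerivAt k
      (Real.cosh r * Real.sinh r ^ (q+1) - ((q:ℝ)+1) * Real.sinh r * I r) r := by
    intro r
    have h1 : HasDerivAt (fun u : ℝ => Real.sinh u ^ (q+2))
        (((q:ℝ)+2) * Real.sinh r ^ (q+1) * Real.cosh r) r := by
      have := (Real.hasDerivAt_sinh r).fun_pow (q+2)
      norm_num at this ⊢
      convert this using 2 <;> push_cast <;> ring
    have h2 : HasDerivAt (fun u : ℝ => ((q:ℝ)+1) * Real.cosh u * I u)
        ((((q:ℝ)+1) * Real.sinh r) * I r + (((q:ℝ)+1) * Real.cosh r) * Real.sinh r ^ (q+1)) r :=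
      ((Real.hasDerivAt_cosh r).const_mul ((q:ℝ)+1)).fun_mul (iso_hasDerivAt_I q r)
    have := h1.fun_sub h2
    refine this.congr_deriv ?_
    ring
  have hk0 : k 0 = 0 := by simp [hk, hI]
  have hkmono : StrictMonoOn k (Ici (0:ℝ)) := by
    apply strictMonoOn_of_deriv_pos (convex_Ici 0)
      (fun x _ => (hkderiv x).continuousAt.continuousWithinAt)
    intro x hx
    rw [interior_Ici] at hx
    rw [(hkderiv x).deriv]
    have h1 : ((q:ℝ)+1) * I x < Real.sinh x ^ (q+1) := iso_key_lt q hx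
    have h2 : 0 < Real.sinh x := Real.sinh_pos_iff.mpr hx
    have h3 : Real.sinh x < Real.cosh x := Real.sinh_lt_cosh x
    have h4 : 0 ≤ Real.sinh x ^ (q+1) := pow_nonneg h2.le _
    nlinarith [mul_lt_mul_of_pos_left h1 h2, mul_le_mul_of_nonneg_right h3.le h4]
  have hkpos : ∀ r : ℝ, 0 < r → 0 < k r := by
    intro r hr
    have := hkmono (self_mem_Ici) (le_of_lt hr : (0:ℝ) ≤ r) hr
    rwa [hk0] at this
  -- derivative of g
  have hgfun : g = fun r => c * I r / Real.sinh r ^ (q+1) := funext hg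
  have hgderiv : ∀ r : ℝ, 0 < r → HasDerivAt g
      ((c * Real.sinh r ^ (q+1) * Real.sinh r ^ (q+1)
        - c * I r * (((q:ℝ)+1) * Real.sinh r ^ q * Real.cosh r))
        / (Real.sinh r ^ (q+1)) ^ 2) r := by
    intro r hr
    rw [hgfun]
    have hS : HasDerivAt (fun u : ℝ => Real.sinh u ^ (q+1))
        (((q:ℝ)+1) * Real.sinh r ^ q * Real.cosh r) r := by
      simpa using (Real.hasDerivAt_sinh r).fun_pow (q+1)
    have hSne : Real.sinh r ^ (q+1) ≠ 0 := by
      have := Real.sinh_pos_iff.mpr hr; positivity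
    exact ((iso_hasDerivAt_I q r).const_mul c).fun_div hS hSne
  have hSpos : ∀ r : ℝ, 0 < r → 0 < Real.sinh r ^ (q+1) := by
    intro r hr; have := Real.sinh_pos_iff.mpr hr; positivity
  refine ⟨?_, ?_, ?_⟩
  · -- strict monotonicity
    apply strictMonoOn_of_deriv_pos (convex_Ioi 0)
      (fun x hx => ((hgderiv x hx).continuousAt.continuousWithinAt))
    intro x hx
    rw [interior_Ioi] at hx
    rw [(hgderiv x hx).deriv]
    have hS := hSpos x hx
    have hsx := Real.sinh_pos_iff.mpr hx
    have hkx := hkpos x hx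
    apply div_pos _ (by positivity)
    have hnum : c * Real.sinh x ^ (q+1) * Real.sinh x ^ (q+1)
        - c * I x * (((q:ℝ)+1) * Real.sinh x ^ q * Real.cosh x)
        = c * Real.sinh x ^ q * k x := by
      simp only [hk]
      ring
    rw [hnum]
    have : 0 < Real.sinh x ^ q := pow_pos hsx q
    positivity
  · -- bound
    intro r hr
    rw [hg r]
    rw [div_lt_div_iff₀ (hSpos r hr) (by positivity : (0:ℝ) < (q:ℝ)+1)]
    have := iso_key_lt q hr
    calc c * I r * ((q:ℝ)+1) = c * (((q:ℝ)+1) * I r) := by ring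
      _ < c * Real.sinh r ^ (q+1) := by
          exact mul_lt_mul_of_pos_left this hc
      _ = c * Real.sinh r ^ (q+1) := rfl
  · -- limit
    have hlow : ∀ᶠ r in atTop, c / ((q:ℝ)+1) - c / Real.sinh r ≤ g r := by
      filter_upwards [eventually_gt_atTop (0:ℝ)] with r hr
      rw [hg r]
      have hS := hSpos r hr
      have hsr := Real.sinh_pos_iff.mpr hr
      have hsplit := iso_S_split q r
      have hJ := iso_J_le q hr
      have hIlow : Real.sinh r ^ (q+1) / ((q:ℝ)+1) - Real.sinh r ^ q ≤ I r := by
        have hq1 : (0:ℝ) < (q:ℝ)+1 := by positivity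
        rw [div_sub' hq1.ne', div_le_iff₀ hq1]
        nlinarith
      have step : (c / ((q:ℝ)+1) - c / Real.sinh r) * Real.sinh r ^ (q+1) ≤ c * I r := by
        have e : (c / ((q:ℝ)+1) - c / Real.sinh r) * Real.sinh r ^ (q+1)
            = c * (Real.sinh r ^ (q+1) / ((q:ℝ)+1) - Real.sinh r ^ q) := by
          field_simp
          ring
        rw [e]
        exact mul_le_mul_of_nonneg_left hIlow hc.le
      rw [le_div_iff₀ hS]
      exact step
    have hhigh : ∀ᶠ r in atTop, g r ≤ c / ((q:ℝ)+1) := by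
      filter_upwards [eventually_gt_atTop (0:ℝ)] with r hr
      rw [hg r]
      have h := iso_key_lt q hr
      rw [div_le_div_iff₀ (hSpos r hr) (by positivity : (0:ℝ) < (q:ℝ)+1)]
      nlinarith
    have hsinh_top : Tendsto Real.sinh atTop atTop := by
      refine tendsto_atTop_mono' atTop ?_ tendsto_id
      filter_upwards [eventually_ge_atTop (0:ℝ)] with r hr
      exact Real.self_le_sinh_iff.mpr hr
    have hzero : Tendsto (fun r => c / Real.sinh r) atTop (nhds 0) :=
      Tendsto.div_atTop tendsto_const_nhds hsinh_top
    have hl : Tendsto (fun r => c / ((q:ℝ)+1) - c / Real.sinh r) atTop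
        (nhds (c / ((q:ℝ)+1))) := by
      have := (tendsto_const_nhds (x := c / ((q:ℝ)+1)) (f := atTop)).sub hzero
      simpa using this
    exact tendsto_of_tendsto_of_tendsto_of_le_of_le' hl tendsto_const_nhds hlow hhigh

/-- Monotonicity and limit of the isoperimetric-type ratio
`ψ(r) = (n σ_n ∫_0^r sinh^{n-1})/sinh(r)^{n-1}`. -/
theorem isoperimetric_ratio_mono (n : ℕ) (hn : 2 ≤ n) (ψ : ℝ → ℝ)
    (hψ : ∀ r : ℝ, ψ r =
      ((n : ℝ) * sigmaVol n * ∫ s in (0:ℝ)..r, Real.sinh s ^ (n - 1)) /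
        Real.sinh r ^ (n - 1)) :
    StrictMonoOn ψ (Ioi (0:ℝ)) ∧
    (∀ r : ℝ, 0 < r → ψ r < (n : ℝ) * sigmaVol n / ((n : ℝ) - 1)) ∧
    Tendsto ψ atTop (nhds ((n : ℝ) * sigmaVol n / ((n : ℝ) - 1))) := by
  obtain ⟨q, rfl⟩ : ∃ q, n = q + 2 := ⟨n - 2, by omega⟩
  have hexp : q + 2 - 1 = q + 1 := rfl
  have hcast : ((q + 2 : ℕ) : ℝ) - 1 = (q:ℝ) + 1 := by push_cast; ring
  set c : ℝ := ((q + 2 : ℕ) : ℝ) * sigmaVol ((q + 2 : ℕ) : ℝ) with hcdef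
  have hσ : 0 < sigmaVol ((q + 2 : ℕ) : ℝ) := by
    unfold sigmaVol
    apply div_pos (Real.rpow_pos_of_pos Real.pi_pos _)
    apply Real.Gamma_pos_of_pos
    positivity
  have hc : 0 < c := by
    apply mul_pos _ hσ
    positivity
  have hg : ∀ r, ψ r = c * (∫ s in (0:ℝ)..r, Real.sinh s ^ (q+1)) / Real.sinh r ^ (q+1) := by
    intro r
    rw [hψ r, hexp]
  obtain ⟨h1, h2, h3⟩ := iso_aux q c hc ψ hg
  refine ⟨h1, ?_, ?_⟩
  · intro r hr
    rw [hcast]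
    exact h2 r hr
  · rw [hcast]
    exact h3
end
end

section
/- (Strengthened lower bound for powers of sinh at the inverse volume function.) Let n ≥ 2 be an integer and let q ≥ 2n/(n−1). Then for every r ≥ 0, setting t = n σ_n ∫_0^r sinh(s)^{n−1} ds, one has sinh(r)^{q(n−1)} ≥ (t/σ_n)^{q(n−1)/n} + ((n−1)/n)^q (t/σ_n)^q. Equivalently, sinh(F(t))^{q(n−1)} ≥ (t/σ_n)^{q(n−1)/n} + ((n−1)/n)^q (t/σ_n)^q for all t ≥ 0. -/
open MeasureTheory Real Set Filter
open scoped ENNReal NNReal BigOperators RealInnerProductSpace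

noncomputable section

namespace SinhAux

/-- helper: nonneg on `Ici 0` from derivative nonneg on `Ioi 0`. -/
lemma nonneg_of_deriv (f g : ℝ → ℝ) (hf : ∀ r, HasDerivAt f (g r) r)
    (h0 : f 0 = 0) (hg : ∀ r, 0 < r → 0 ≤ g r) {r : ℝ} (hr : 0 ≤ r) : 0 ≤ f r := by
  have hc : ContinuousOn f (Ici 0) := fun x _ => (hf x).continuousAt.continuousWithinAt
  have hd : DifferentiableOn ℝ f (interior (Ici 0)) :=
    fun x _ => (hf x).differentiableAt.differentiableWithinAt
  have hm : MonotoneOn f (Ici 0) := by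
    refine monotoneOn_of_deriv_nonneg (convex_Ici 0) hc hd (fun x hx => ?_)
    rw [interior_Ici] at hx
    rw [(hf x).deriv]
    exact hg x hx
  have := hm (le_refl (0:ℝ)) hr hr
  rwa [h0] at this

def Xf (k : ℕ) : ℝ → ℝ := fun r => ((k:ℝ)+2) * ∫ s in (0:ℝ)..r, Real.sinh s ^ (k+1)

lemma contInt (k : ℕ) : Continuous fun s : ℝ => Real.sinh s ^ (k+1) :=
  Real.continuous_sinh.pow _

lemma hasDerivX (k : ℕ) (r : ℝ) :
    HasDerivAt (Xf k) (((k:ℝ)+2) * Real.sinh r ^ (k+1)) r := by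
  have h := intervalIntegral.integral_hasDerivAt_right
    ((contInt k).intervalIntegrable 0 r)
    ((contInt k).stronglyMeasurable.stronglyMeasurableAtFilter)
    (contInt k).continuousAt
  exact h.const_mul _

lemma X0 (k : ℕ) : Xf k 0 = 0 := by simp [Xf]

lemma Xnonneg (k : ℕ) {r : ℝ} (hr : 0 ≤ r) : 0 ≤ Xf k r := by
  have : 0 ≤ ∫ s in (0:ℝ)..r, Real.sinh s ^ (k+1) := by
    apply intervalIntegral.integral_nonneg hr
    intro s hs
    exact pow_nonneg (Real.sinh_nonneg_iff.2 hs.1) _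
  have h2 : (0:ℝ) ≤ (k:ℝ)+2 := by positivity
  simpa [Xf] using mul_nonneg h2 this


/-- Lemma A : ((k+1)/(k+2)) * X r ≤ sinh r ^ (k+1) for r ≥ 0 -/
lemma lemA (k : ℕ) {r : ℝ} (hr : 0 ≤ r) :
    ((k:ℝ)+1)/((k:ℝ)+2) * Xf k r ≤ Real.sinh r ^ (k+1) := by
  have key : 0 ≤ Real.sinh r ^ (k+1) - ((k:ℝ)+1)/((k:ℝ)+2) * Xf k r := by
    apply nonneg_of_deriv _
      (fun r => ((k:ℝ)+1) * Real.sinh r ^ k * Real.cosh r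
        - ((k:ℝ)+1)/((k:ℝ)+2) * (((k:ℝ)+2) * Real.sinh r ^ (k+1)))
      (fun r => ?_) (by simp [X0]) (fun r hr => ?_) hr
    · have h1 : HasDerivAt (fun r => Real.sinh r ^ (k+1))
          (((k:ℝ)+1) * Real.sinh r ^ k * Real.cosh r) r := by
        have := (Real.hasDerivAt_sinh r).fun_pow (k+1)
        simpa using this
      exact h1.sub ((hasDerivX k r).const_mul _)
    · have hS : 0 ≤ Real.sinh r := Real.sinh_nonneg_iff.2 hr.le
      have hCS : Real.sinh r ≤ Real.cosh r := by
        nlinarith [Real.cosh_sub_sinh r, Real.exp_pos (-r)]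
      have hc : ((k:ℝ)+1)/((k:ℝ)+2) * (((k:ℝ)+2) * Real.sinh r ^ (k+1))
          = ((k:ℝ)+1) * Real.sinh r ^ (k+1) := by
        field_simp
      simp only [hc]
      have hpow : Real.sinh r ^ (k+1) = Real.sinh r ^ k * Real.sinh r := by ring
      rw [hpow]
      have hk : (0:ℝ) ≤ (k:ℝ)+1 := by positivity
      nlinarith [pow_nonneg hS k, mul_le_mul_of_nonneg_left hCS (pow_nonneg hS k)]
  linarith


lemma hasDerivCXP (k : ℕ) (c p : ℝ) (hp : 1 ≤ p) (r : ℝ) :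
    HasDerivAt (fun y => (c * Xf k y) ^ p)
      (p * (c * Xf k r) ^ (p - 1) * (c * (((k:ℝ)+2) * Real.sinh r ^ (k+1)))) r := by
  have hx : HasDerivAt (fun y => c * Xf k y) (c * (((k:ℝ)+2) * Real.sinh r ^ (k+1))) r :=
    (hasDerivX k r).const_mul c
  have hrp := (Real.hasDerivAt_rpow_const (x := c * Xf k r) (p := p) (Or.inr hp)).comp r hx
  simpa [Function.comp_def] using hrp

lemma rpow_pow_le (k : ℕ) {r : ℝ} (hr : 0 ≤ r) :
    (((k:ℝ)+1)/((k:ℝ)+2) * Xf k r) ^ (2/((k:ℝ)+1)) ≤ Real.sinh r ^ 2 := by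
  have hS : 0 ≤ Real.sinh r := Real.sinh_nonneg_iff.2 hr
  have hcX : 0 ≤ ((k:ℝ)+1)/((k:ℝ)+2) * Xf k r := by
    have := Xnonneg k hr
    positivity
  have h1 : (((k:ℝ)+1)/((k:ℝ)+2) * Xf k r) ^ (2/((k:ℝ)+1))
      ≤ (Real.sinh r ^ (k+1) : ℝ) ^ (2/((k:ℝ)+1)) :=
    Real.rpow_le_rpow hcX (lemA k hr) (by positivity)
  have h2 : ((Real.sinh r ^ (k+1) : ℝ)) ^ (2/((k:ℝ)+1)) = Real.sinh r ^ 2 := by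
    rw [← Real.rpow_natCast (Real.sinh r) (k+1), ← Real.rpow_mul hS]
    rw [show ((k+1:ℕ):ℝ) * (2/((k:ℝ)+1)) = ((2:ℕ):ℝ) by
      push_cast; field_simp]
    rw [Real.rpow_natCast]
  rwa [h2] at h1

/-- Lemma B -/
lemma lemB (k : ℕ) {r : ℝ} (hr : 0 ≤ r) :
    Xf k r + (((k:ℝ)+1)/((k:ℝ)+2) * Xf k r) ^ (((k:ℝ)+3)/((k:ℝ)+1))
      ≤ Real.sinh r ^ (k+2) * Real.cosh r := by
  set c : ℝ := ((k:ℝ)+1)/((k:ℝ)+2) with hc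
  set p : ℝ := ((k:ℝ)+3)/((k:ℝ)+1) with hp
  have hk1 : (0:ℝ) < (k:ℝ)+1 := by positivity
  have hp1 : 1 ≤ p := by
    rw [hp, le_div_iff₀ hk1]; linarith
  have key : 0 ≤ Real.sinh r ^ (k+2) * Real.cosh r - Xf k r
      - (c * Xf k r) ^ p := by
    refine nonneg_of_deriv
      (fun y => Real.sinh y ^ (k+2) * Real.cosh y - Xf k y - (c * Xf k y) ^ p)
      (fun y => ((((k:ℝ)+2) * Real.sinh y ^ (k+1) * Real.cosh y) * Real.cosh y
          + Real.sinh y ^ (k+2) * Real.sinh y)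
        - (((k:ℝ)+2) * Real.sinh y ^ (k+1))
        - p * (c * Xf k y) ^ (p - 1) * (c * (((k:ℝ)+2) * Real.sinh y ^ (k+1))))
      (fun y => ?_) ?_ (fun y hy => ?_) hr
    · have h1 : HasDerivAt (fun z => Real.sinh z ^ (k+2) * Real.cosh z)
          ((((k:ℝ)+2) * Real.sinh y ^ (k+1) * Real.cosh y) * Real.cosh y
            + Real.sinh y ^ (k+2) * Real.sinh y) y := by
        have hpow := (Real.hasDerivAt_sinh y).fun_pow (k+2)
        have hmul := hpow.mul (Real.hasDerivAt_cosh y)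
        refine hmul.congr_deriv ?_
        push_cast
        ring
      exact (h1.sub (hasDerivX k y)).sub (hasDerivCXP k c p hp1 y)
    · have h0p : (0:ℝ) ^ p = 0 := Real.zero_rpow (by positivity)
      simp [X0, h0p]
    · have hy0 : (0:ℝ) ≤ y := hy.le
      have hS : 0 ≤ Real.sinh y := Real.sinh_nonneg_iff.2 hy0
      have hSK1 : 0 ≤ Real.sinh y ^ (k+1) := pow_nonneg hS _
      have hexp : p - 1 = 2/((k:ℝ)+1) := by
        rw [hp, div_sub_one (ne_of_gt hk1)]; congr 1; ring
      have hB : (c * Xf k y) ^ (p - 1) ≤ Real.sinh y ^ 2 := by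
        rw [hexp]; exact rpow_pow_le k hy0
      have hcoef : p * c * ((k:ℝ)+2) = (k:ℝ)+3 := by
        rw [hp, hc]; field_simp
      have hC2 : Real.cosh y ^ 2 = Real.sinh y ^ 2 + 1 := Real.cosh_sq y
      have hmul : ((k:ℝ)+3) * (Real.sinh y ^ (k+1) * (c * Xf k y) ^ (p-1))
          ≤ ((k:ℝ)+3) * (Real.sinh y ^ (k+1) * Real.sinh y ^ 2) := by
        apply mul_le_mul_of_nonneg_left _ (by positivity)
        exact mul_le_mul_of_nonneg_left hB hSK1
      have e1 : p * (c * Xf k y) ^ (p-1) * (c * (((k:ℝ)+2) * Real.sinh y ^ (k+1)))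
          = ((k:ℝ)+3) * (Real.sinh y ^ (k+1) * (c * Xf k y) ^ (p-1)) := by
        linear_combination (Real.sinh y ^ (k+1) * (c * Xf k y) ^ (p-1)) * hcoef
      beta_reduce
      rw [e1]
      have e2 : Real.sinh y ^ (k+2) * Real.sinh y = Real.sinh y ^ (k+1) * Real.sinh y ^ 2 := by
        ring
      have e3 : (((k:ℝ)+2) * Real.sinh y ^ (k+1) * Real.cosh y) * Real.cosh y
          = ((k:ℝ)+2) * Real.sinh y ^ (k+1) * (Real.sinh y ^ 2 + 1) := by
        rw [← hC2]; ring
      rw [e2, e3]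
      nlinarith [hmul]
  linarith

/-- Lemma C -/
lemma lemC (k : ℕ) {r : ℝ} (hr : 0 ≤ r) :
    (Xf k r) ^ 2 + (((k:ℝ)+1)/((k:ℝ)+2) * Xf k r) ^ ((2*(k:ℝ)+4)/((k:ℝ)+1))
      ≤ Real.sinh r ^ (2*k+4) := by
  set c : ℝ := ((k:ℝ)+1)/((k:ℝ)+2) with hc
  set p : ℝ := (2*(k:ℝ)+4)/((k:ℝ)+1) with hp
  have hk1 : (0:ℝ) < (k:ℝ)+1 := by positivity
  have hp1 : 1 ≤ p := by rw [hp, le_div_iff₀ hk1]; linarith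
  have key : 0 ≤ Real.sinh r ^ (2*k+4) - (Xf k r) ^ 2 - (c * Xf k r) ^ p := by
    refine nonneg_of_deriv
      (fun y => Real.sinh y ^ (2*k+4) - (Xf k y) ^ 2 - (c * Xf k y) ^ p)
      (fun y => ((2*(k:ℝ)+4) * Real.sinh y ^ (2*k+3) * Real.cosh y)
        - (2 * Xf k y * (((k:ℝ)+2) * Real.sinh y ^ (k+1)))
        - p * (c * Xf k y) ^ (p - 1) * (c * (((k:ℝ)+2) * Real.sinh y ^ (k+1))))
      (fun y => ?_) ?_ (fun y hy => ?_) hr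
    · have h1 : HasDerivAt (fun z => Real.sinh z ^ (2*k+4))
          ((2*(k:ℝ)+4) * Real.sinh y ^ (2*k+3) * Real.cosh y) y := by
        have hpow := (Real.hasDerivAt_sinh y).fun_pow (2*k+4)
        convert hpow using 2
        all_goals first
          | rfl
          | (push_cast; ring)
          | omega
      have h2 : HasDerivAt (fun z => (Xf k z) ^ 2)
          (2 * Xf k y * (((k:ℝ)+2) * Real.sinh y ^ (k+1))) y := by
        have h := (hasDerivX k y).fun_pow 2
        convert h using 2
        all_goals first
          | rfl
          | (push_cast; ring)
          | omega
      exact (h1.sub h2).sub (hasDerivCXP k c p hp1 y)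
    · have h0p : (0:ℝ) ^ p = 0 := Real.zero_rpow (by positivity)
      simp [X0, h0p]
    · have hy0 : (0:ℝ) ≤ y := hy.le
      have hS : 0 ≤ Real.sinh y := Real.sinh_nonneg_iff.2 hy0
      have hSK1 : 0 ≤ Real.sinh y ^ (k+1) := pow_nonneg hS _
      have hexp : p - 1 = ((k:ℝ)+3)/((k:ℝ)+1) := by
        rw [hp, div_sub_one (ne_of_gt hk1)]; congr 1; ring
      have hcoef : p * c * ((k:ℝ)+2) = 2*(k:ℝ)+4 := by
        rw [hp, hc]; field_simp
      have hBineq : Xf k y + (c * Xf k y) ^ (p-1)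
          ≤ Real.sinh y ^ (k+2) * Real.cosh y := by
        rw [hexp]; exact lemB k hy0
      have e1 : p * (c * Xf k y) ^ (p-1) * (c * (((k:ℝ)+2) * Real.sinh y ^ (k+1)))
          = (2*(k:ℝ)+4) * (Real.sinh y ^ (k+1) * (c * Xf k y) ^ (p-1)) := by
        linear_combination (Real.sinh y ^ (k+1) * (c * Xf k y) ^ (p-1)) * hcoef
      beta_reduce
      rw [e1]
      have e2 : Real.sinh y ^ (2*k+3) = Real.sinh y ^ (k+1) * Real.sinh y ^ (k+2) := by
        rw [← pow_add]; congr 1; omega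
      have hfac : 0 ≤ (2*(k:ℝ)+4) * (Real.sinh y ^ (k+1)
          * (Real.sinh y ^ (k+2) * Real.cosh y - Xf k y - (c * Xf k y) ^ (p-1))) := by
        apply mul_nonneg (by positivity)
        apply mul_nonneg hSK1
        linarith [hBineq]
      rw [e2]
      nlinarith [hfac]
  linarith


lemma add_rpow_le (a b θ : ℝ) (ha : 0 ≤ a) (hb : 0 ≤ b) (hθ : 1 ≤ θ) :
    a ^ θ + b ^ θ ≤ (a + b) ^ θ := by
  have h := NNReal.add_rpow_le_rpow_add a.toNNReal b.toNNReal hθ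
  have h2 := NNReal.coe_le_coe.2 h
  push_cast [NNReal.coe_rpow] at h2
  rwa [Real.coe_toNNReal _ ha, Real.coe_toNNReal _ hb] at h2


end SinhAux

/-- Strengthened lower bound for powers of sinh at the inverse volume function. -/
theorem sinh_pow_strengthened (n : ℕ) (hn : 2 ≤ n) (q : ℝ)
    (hq : 2 * (n : ℝ) / ((n : ℝ) - 1) ≤ q) :
    ∀ r : ℝ, 0 ≤ r → ∀ t : ℝ,
      t = (n : ℝ) * sigmaVol n * ∫ s in (0:ℝ)..r, Real.sinh s ^ (n - 1) →
      (t / sigmaVol n) ^ (q * ((n : ℝ) - 1) / n)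
          + (((n : ℝ) - 1) / n) ^ q * (t / sigmaVol n) ^ q
        ≤ Real.sinh r ^ (q * ((n : ℝ) - 1)) := by
  obtain ⟨k, rfl⟩ : ∃ k, n = k + 2 := ⟨n - 2, by omega⟩
  intro r hr t ht
  have hcast : ((k+2:ℕ):ℝ) = (k:ℝ)+2 := by push_cast; ring
  rw [hcast] at ht hq ⊢
  have hk1 : (0:ℝ) < (k:ℝ)+1 := by positivity
  have hk2 : (0:ℝ) < (k:ℝ)+2 := by positivity
  have hσ : 0 < sigmaVol ((k:ℝ)+2) := by
    have h1 : 0 < Real.pi ^ (((k:ℝ)+2)/2) := Real.rpow_pos_of_pos Real.pi_pos _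
    have h2 : 0 < Real.Gamma (((k:ℝ)+2)/2 + 1) := Real.Gamma_pos_of_pos (by positivity)
    exact div_pos h1 h2
  have hS : 0 ≤ Real.sinh r := Real.sinh_nonneg_iff.2 hr
  -- clean up hypothesis hq
  have hkm : ((k:ℝ)+2) - 1 = (k:ℝ)+1 := by ring
  rw [hkm] at hq ⊢
  have hq' : 2*((k:ℝ)+2) ≤ q*((k:ℝ)+1) := by
    rw [div_le_iff₀ hk1] at hq
    linarith
  have hqpos : 0 < q := by nlinarith
  -- identify t / σ with SinhAux.Xf k r
  have hxval : t / sigmaVol ((k:ℝ)+2) = SinhAux.Xf k r := by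
    rw [ht]
    show ((k:ℝ)+2) * sigmaVol ((k:ℝ)+2) * (∫ s in (0:ℝ)..r, Real.sinh s ^ (k+1))
        / sigmaVol ((k:ℝ)+2) = _
    rw [SinhAux.Xf]
    field_simp
  rw [hxval]
  set X := SinhAux.Xf k r with hXdef
  have hX0 : 0 ≤ X := SinhAux.Xnonneg k hr
  set c : ℝ := ((k:ℝ)+1)/((k:ℝ)+2) with hc
  set p : ℝ := (2*(k:ℝ)+4)/((k:ℝ)+1) with hp
  set θ : ℝ := q*((k:ℝ)+1)/(2*((k:ℝ)+2)) with hθdef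
  have hθ1 : (1:ℝ) ≤ θ := by
    rw [hθdef, le_div_iff₀ (by positivity)]
    linarith
  have hθ0 : (0:ℝ) ≤ θ := by linarith
  have hcX0 : 0 ≤ c * X := by positivity
  have hC := SinhAux.lemC k hr
  have hsum0 : 0 ≤ X^2 + (c*X)^p := by
    have := Real.rpow_nonneg hcX0 p
    positivity
  -- step 4 : (X^2)^θ = X ^ (q*(k+1)/(k+2))
  have step4 : ((X^2 : ℝ))^θ = X ^ (q*((k:ℝ)+1)/((k:ℝ)+2)) := by
    rw [← Real.rpow_natCast X 2, ← Real.rpow_mul hX0]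
    congr 1
    rw [hθdef]
    push_cast
    field_simp
  -- step 5 : ((c*X)^p)^θ = c^q * X^q
  have step5 : ((c*X)^p)^θ = c ^ q * X ^ q := by
    rw [← Real.rpow_mul hcX0]
    rw [show p * θ = q by rw [hp, hθdef]; field_simp; ring]
    exact Real.mul_rpow (by positivity) hX0
  have step3 : ((X^2 : ℝ))^θ + ((c*X)^p)^θ ≤ (X^2 + (c*X)^p)^θ :=
    SinhAux.add_rpow_le _ _ θ (by positivity) (Real.rpow_nonneg hcX0 p) hθ1
  have step1 : (X^2 + (c*X)^p)^θ ≤ ((Real.sinh r ^ (2*k+4) : ℝ))^θ :=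
    Real.rpow_le_rpow hsum0 hC hθ0
  have step2 : ((Real.sinh r ^ (2*k+4) : ℝ))^θ = Real.sinh r ^ (q*((k:ℝ)+1)) := by
    rw [← Real.rpow_natCast (Real.sinh r) (2*k+4), ← Real.rpow_mul hS]
    congr 1
    rw [hθdef]
    push_cast
    field_simp
    ring
  calc X ^ (q*((k:ℝ)+1)/((k:ℝ)+2)) + c ^ q * X ^ q
      = ((X^2 : ℝ))^θ + ((c*X)^p)^θ := by rw [step4, step5]
    _ ≤ (X^2 + (c*X)^p)^θ := step3
    _ ≤ ((Real.sinh r ^ (2*k+4) : ℝ))^θ := step1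
    _ = Real.sinh r ^ (q*((k:ℝ)+1)) := step2
end
end
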